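/- Let K be a finite simplicial complex, V a subset of simplices of K that is convex with respect to the face relation, and τ a maximal simplex of V. Define V₂ = {σ ∈ V : τ is the unique maximal element of V above σ} and V₁ = V \ V₂. Then both V₁ and V₂ are convex with respect to the face relation. -/

import Mathlib

/-- Splitting a convex set `V` of simplices at a maximal simplex `τ`:
`V₂` consists of those `σ ∈ V` whose unique maximal element of `V` above them is `τ`,
and `V₁ = V \ V₂`. Both are convex with respect to the face relation. -/
theorem split_convex_at_maximal {α : Type*} (K : Set (Finset α)) (hKfin : K.Finite)
    (hK : ∀ σ ∈ K, σ.Nonempty ∧ ∀ ρ : Finset α, ρ ⊆ σ → ρ.Nonempty → ρ ∈ K)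
    (V : Set (Finset α)) (hVK : V ⊆ K)
    (hVconv : ∀ x ∈ V, ∀ z ∈ V, ∀ y ∈ K, x ⊆ y → y ⊆ z → y ∈ V)
    (τ : Finset α) (hτ : τ ∈ V) (hτmax : ∀ ρ ∈ V, τ ⊆ ρ → ρ = τ)
    (V₂ : Set (Finset α))
    (hV₂ : V₂ = {σ ∈ V | σ ⊆ τ ∧
      ∀ ρ ∈ V, σ ⊆ ρ → (∀ ρ' ∈ V, ρ ⊆ ρ' → ρ' = ρ) → ρ = τ})
    (V₁ : Set (Finset α)) (hV₁ : V₁ = V \ V₂) :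
    (∀ x ∈ V₁, ∀ z ∈ V₁, ∀ y ∈ K, x ⊆ y → y ⊆ z → y ∈ V₁) ∧
    (∀ x ∈ V₂, ∀ z ∈ V₂, ∀ y ∈ K, x ⊆ y → y ⊆ z → y ∈ V₂) := by
  subst hV₂ hV₁
  constructor
  · rintro x ⟨hxV, hxn⟩ z ⟨hzV, hzn⟩ y hyK hxy hyz
    have hyV : y ∈ V := hVconv x hxV z hzV y hyK hxy hyz
    refine ⟨hyV, fun hy2 => ?_⟩
    obtain ⟨_, _, hymax⟩ := hy2
    -- show z ∈ V₂, contradiction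
    apply hzn
    -- find a maximal element of V above z
    have hSfin : {ρ ∈ V | z ⊆ ρ}.Finite := (hKfin.subset hVK).subset (Set.sep_subset _ _)
    obtain ⟨m, ⟨hmV, hzm⟩, hmmax⟩ :=
      Set.Finite.exists_maximalFor id _ hSfin ⟨z, hzV, subset_rfl⟩
    have hmVmax : ∀ ρ' ∈ V, m ⊆ ρ' → ρ' = m := by
      intro ρ' hρ'V hmρ'
      exact Finset.Subset.antisymm (hmmax ⟨hρ'V, hzm.trans hmρ'⟩ hmρ') hmρ'
    have hmτ : m = τ := hymax m hmV (hyz.trans hzm) hmVmax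
    refine ⟨hzV, hmτ ▸ hzm, fun ρ hρV hzρ hρmax => ?_⟩
    exact hymax ρ hρV (hyz.trans hzρ) hρmax
  · rintro x ⟨hxV, hxτ, hxmax⟩ z ⟨hzV, hzτ, hzmax⟩ y hyK hxy hyz
    have hyV : y ∈ V := hVconv x hxV z hzV y hyK hxy hyz
    exact ⟨hyV, hyz.trans hzτ, fun ρ hρV hyρ hρmax => hxmax ρ hρV (hxy.trans hyρ) hρmax⟩
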